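/- Let n ≥ 1, c ∈ ℝ, f_i : ℝ → ℝ continuously differentiable for each i ∈ Fin n, and m : Fin n → Fin n → ℝ. Define the model f(x) = c + ∑_{i} f_i(x_i) + ∑_{i} ∑_{j} m_{ij}·x_i·x_j. Then for all points a, b ∈ ℝⁿ and every feature i, the Integrated Gradients attribution along the straight-line path equals the interventional Shapley value: IG_i(f,a,b) = BS_i(f,b,a) (with b the explanation point and a the reference point). -/

import Mathlib

def patch {n : ℕ} (x r : Fin n → ℝ) (S : Finset (Fin n)) : Fin n → ℝ :=
  fun j => if j ∈ S then x j else r j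

noncomputable def BS {n : ℕ} (f : (Fin n → ℝ) → ℝ) (x r : Fin n → ℝ) (i : Fin n) : ℝ :=
  ∑ S ∈ (Finset.univ.erase i).powerset,
    ((S.card.factorial * (n - S.card - 1).factorial : ℝ) / (n.factorial : ℝ)) *
      (f (patch x r (insert i S)) - f (patch x r S))

noncomputable def IG {n : ℕ} (f : (Fin n → ℝ) → ℝ) (a b : Fin n → ℝ) (i : Fin n) : ℝ :=
  (b i - a i) * ∫ t in (0:ℝ)..1, fderiv ℝ f (fun j => a j + t * (b j - a j)) (Pi.single i 1)


theorem W1 (n : ℕ) (hn : 1 ≤ n) (i : Fin n) :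
    ∑ S ∈ (Finset.univ.erase i).powerset,
      ((S.card.factorial * (n - S.card - 1).factorial : ℝ) / (n.factorial : ℝ)) = 1 := by
  have hcard : (Finset.univ.erase i).card = n - 1 := by
    simp [Finset.card_erase_of_mem]
  rw [Finset.sum_powerset_apply_card
      (f := fun k => ((k.factorial * (n - k - 1).factorial : ℝ) / (n.factorial : ℝ)))]
  rw [hcard]
  have h1 : n - 1 + 1 = n := Nat.succ_pred_eq_of_pos hn
  rw [h1]
  have hstep : ∀ k ∈ Finset.range n,
      (n-1).choose k • ((k.factorial * (n - k - 1).factorial : ℝ) / (n.factorial : ℝ))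
        = ((n-1).factorial : ℝ) / (n.factorial : ℝ) := by
    intro k hk
    have hk' : k ≤ n - 1 := Nat.le_pred_of_lt (Finset.mem_range.1 hk)
    have key := Nat.choose_mul_factorial_mul_factorial hk'
    have h2 : n - k - 1 = n - 1 - k := by omega
    rw [nsmul_eq_mul, h2]
    field_simp
    push_cast [← key]
    ring
  rw [Finset.sum_congr rfl hstep, Finset.sum_const, nsmul_eq_mul, Finset.card_range]
  have hfac : n.factorial = n * (n-1).factorial := by
    conv_lhs => rw [← h1]
    rw [Nat.factorial_succ, h1]
  field_simp [hfac]
  exact_mod_cast hfac.symm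

theorem W2 (n : ℕ) (hn : 1 ≤ n) (i j : Fin n) (hj : j ≠ i) :
    ∑ S ∈ (Finset.univ.erase i).powerset,
      ((S.card.factorial * (n - S.card - 1).factorial : ℝ) / (n.factorial : ℝ)) *
        (if j ∈ S then (1:ℝ) else 0) = 1/2 := by
  set T := (Finset.univ.erase i) with hT
  have hjT : j ∈ T := Finset.mem_erase.2 ⟨hj, Finset.mem_univ j⟩
  have hcard : T.card = n - 1 := by simp [hT, Finset.card_erase_of_mem]
  set w : ℕ → ℝ := fun k => ((k.factorial * (n - k - 1).factorial : ℝ) / (n.factorial : ℝ)) with hw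
  have key : ∑ S ∈ T.powerset, w S.card * (if j ∈ S then (1:ℝ) else 0)
      = ∑ S ∈ T.powerset, w S.card * (if j ∈ S then (0:ℝ) else 1) := by
    apply Finset.sum_nbij' (i := fun S => T \ S) (j := fun S => T \ S)
    · intro S hS; exact Finset.mem_powerset.2 (Finset.sdiff_subset)
    · intro S hS; exact Finset.mem_powerset.2 (Finset.sdiff_subset)
    · intro S hS
      exact Finset.sdiff_sdiff_eq_self (Finset.mem_powerset.1 hS)
    · intro S hS
      exact Finset.sdiff_sdiff_eq_self (Finset.mem_powerset.1 hS)
    · intro S hS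
      have hSsub := Finset.mem_powerset.1 hS
      have hc : (T \ S).card = n - 1 - S.card := by
        rw [Finset.card_sdiff_of_subset hSsub, hcard]
      have hck : S.card ≤ n - 1 := hcard ▸ Finset.card_le_card hSsub
      have hwsym : w ((T\S).card) = w S.card := by
        rw [hc, hw]
        have e1 : n - (n - 1 - S.card) - 1 = S.card := by omega
        have e2 : n - S.card - 1 = n - 1 - S.card := by omega
        simp only [e1, e2, mul_comm]
      have hmem : (j ∈ T \ S) ↔ ¬ (j ∈ S) := by
        simp [Finset.mem_sdiff, hjT]
      rw [hwsym]
      by_cases h : j ∈ S <;> simp [h, hmem]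
  have hsum : (∑ S ∈ T.powerset, w S.card * (if j ∈ S then (1:ℝ) else 0))
      + ∑ S ∈ T.powerset, w S.card * (if j ∈ S then (0:ℝ) else 1)
      = ∑ S ∈ T.powerset, w S.card := by
    rw [← Finset.sum_add_distrib]
    apply Finset.sum_congr rfl
    intro S hS
    by_cases h : j ∈ S <;> simp [h]
  have h1 := W1 n hn i
  rw [← key] at hsum
  rw [hT] at hsum
  rw [h1] at hsum
  linarith [hsum]


open ContinuousLinearMap in
theorem fderiv_model (n : ℕ) (c : ℝ) (fs : Fin n → ℝ → ℝ) (hfs : ∀ i, ContDiff ℝ 1 (fs i))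
    (m : Fin n → Fin n → ℝ) (i : Fin n) (x : Fin n → ℝ) :
    fderiv ℝ (fun x : Fin n → ℝ => c + ∑ p, fs p (x p) + ∑ p, ∑ q, m p q * x p * x q) x
      (Pi.single i 1)
    = deriv (fs i) (x i) + ∑ j, (m i j + m j i) * x j := by
  have hproj : ∀ p : Fin n, HasFDerivAt (fun y : Fin n → ℝ => y p)
      (ContinuousLinearMap.proj p : (Fin n → ℝ) →L[ℝ] ℝ) x :=
    fun p => by
      have h := (ContinuousLinearMap.proj (R := ℝ) (φ := fun _ : Fin n => ℝ) p).hasFDerivAt (x := x)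
      exact h
  have hsep : ∀ p : Fin n, HasFDerivAt (fun y : Fin n → ℝ => fs p (y p))
      (deriv (fs p) (x p) • (ContinuousLinearMap.proj p : (Fin n → ℝ) →L[ℝ] ℝ)) x := by
    intro p
    exact (((hfs p).differentiable one_ne_zero).differentiableAt.hasDerivAt).comp_hasFDerivAt x
      (hproj p)
  have hbil : ∀ p q : Fin n, HasFDerivAt (fun y : Fin n → ℝ => m p q * y p * y q)
      (m p q • (x p • (ContinuousLinearMap.proj q : (Fin n → ℝ) →L[ℝ] ℝ)
        + x q • (ContinuousLinearMap.proj p : (Fin n → ℝ) →L[ℝ] ℝ))) x := by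
    intro p q
    have h := (((hproj p).mul (hproj q)).const_mul (m p q))
    have hfun : (fun y : Fin n → ℝ => m p q * y p * y q) = fun y => m p q * (y p * y q) := by
      funext y; ring
    rw [hfun]
    exact h
  have hF : HasFDerivAt (fun x : Fin n → ℝ => c + ∑ p, fs p (x p) + ∑ p, ∑ q, m p q * x p * x q)
      ((∑ p, deriv (fs p) (x p) • (ContinuousLinearMap.proj p : (Fin n → ℝ) →L[ℝ] ℝ))
        + ∑ p, ∑ q, m p q • (x p • (ContinuousLinearMap.proj q : (Fin n → ℝ) →L[ℝ] ℝ)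
          + x q • (ContinuousLinearMap.proj p : (Fin n → ℝ) →L[ℝ] ℝ))) x := by
    have h1 : HasFDerivAt (fun x : Fin n → ℝ => c + ∑ p, fs p (x p))
        (∑ p, deriv (fs p) (x p) • (ContinuousLinearMap.proj p : (Fin n → ℝ) →L[ℝ] ℝ)) x :=
      (HasFDerivAt.fun_sum (fun p _ => hsep p)).const_add c
    have h2 : HasFDerivAt (fun x : Fin n → ℝ => ∑ p, ∑ q, m p q * x p * x q)
        (∑ p, ∑ q, m p q • (x p • (ContinuousLinearMap.proj q : (Fin n → ℝ) →L[ℝ] ℝ)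
          + x q • (ContinuousLinearMap.proj p : (Fin n → ℝ) →L[ℝ] ℝ))) x :=
      HasFDerivAt.fun_sum (fun p _ => HasFDerivAt.fun_sum (fun q _ => hbil p q))
    exact h1.add h2
  rw [hF.fderiv]
  simp only [ContinuousLinearMap.add_apply, ContinuousLinearMap.coe_sum', Finset.sum_apply,
    ContinuousLinearMap.coe_smul', Pi.smul_apply, ContinuousLinearMap.proj_apply,
    smul_eq_mul, ContinuousLinearMap.smul_apply, ContinuousLinearMap.coe_add',
    Pi.add_apply, Pi.single_apply]
  rw [Finset.sum_congr rfl (fun p _ => by rw [mul_ite, mul_one, mul_zero] :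
    ∀ p ∈ Finset.univ, deriv (fs p) (x p) * (if p = i then (1:ℝ) else 0)
      = if p = i then deriv (fs p) (x p) else 0)]
  rw [Finset.sum_ite_eq' Finset.univ i (fun p => deriv (fs p) (x p))]
  simp only [Finset.mem_univ, if_true]
  congr 1
  have step : ∀ p : Fin n,
      (∑ q, m p q * ((x p * if q = i then (1:ℝ) else 0) + x q * if p = i then (1:ℝ) else 0))
      = m p i * x p + (if p = i then ∑ q, m p q * x q else 0) := by
    intro p
    rw [Finset.sum_congr rfl (fun q _ => by by_cases hq : q = i <;> by_cases hp : p = i <;>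
      simp [hq, hp] <;> ring :
      ∀ q ∈ Finset.univ, m p q * ((x p * if q = i then (1:ℝ) else 0) + x q * if p = i then (1:ℝ) else 0)
        = (if q = i then m p i * x p else 0) + (if p = i then m p q * x q else 0))]
    rw [Finset.sum_add_distrib, Finset.sum_ite_eq' Finset.univ i (fun _ => m p i * x p)]
    simp [Finset.sum_ite_irrel]
  rw [Finset.sum_congr rfl (fun p _ => step p), Finset.sum_add_distrib,
    Finset.sum_ite_eq' Finset.univ i (fun p => ∑ q, m p q * x q)]
  simp only [Finset.mem_univ, if_true]
  rw [← Finset.sum_add_distrib]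
  apply Finset.sum_congr rfl
  intro j _
  ring


theorem integral_model (n : ℕ) (fs : Fin n → ℝ → ℝ) (hfs : ∀ i, ContDiff ℝ 1 (fs i))
    (m : Fin n → Fin n → ℝ) (a b : Fin n → ℝ) (i : Fin n) :
    (b i - a i) * ∫ t in (0:ℝ)..1,
        (deriv (fs i) (a i + t * (b i - a i)) + ∑ j, (m i j + m j i) * (a j + t * (b j - a j)))
      = (fs i (b i) - fs i (a i)) + (b i - a i) * ∑ j, (m i j + m j i) * ((a j + b j)/2) := by
  have hderiv_cont : Continuous (fun t : ℝ => deriv (fs i) (a i + t * (b i - a i))) :=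
    ((hfs i).continuous_deriv le_rfl).comp (by continuity)
  have hint1 : IntervalIntegrable (fun t : ℝ => deriv (fs i) (a i + t * (b i - a i)))
      MeasureTheory.volume 0 1 := hderiv_cont.intervalIntegrable 0 1
  have hint2 : IntervalIntegrable
      (fun t : ℝ => ∑ j, (m i j + m j i) * (a j + t * (b j - a j)))
      MeasureTheory.volume 0 1 := by
    apply Continuous.intervalIntegrable; continuity
  rw [intervalIntegral.integral_add hint1 hint2]
  have P1 : (b i - a i) * ∫ t in (0:ℝ)..1, deriv (fs i) (a i + t * (b i - a i))
      = fs i (b i) - fs i (a i) := by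
    rw [← intervalIntegral.integral_const_mul]
    have key : ∫ t in (0:ℝ)..1, (b i - a i) * deriv (fs i) (a i + t * (b i - a i))
        = fs i (a i + 1 * (b i - a i)) - fs i (a i + 0 * (b i - a i)) := by
      apply intervalIntegral.integral_eq_sub_of_hasDerivAt (f := fun u => fs i (a i + u * (b i - a i)))
      · intro t ht
        have haff : HasDerivAt (fun t : ℝ => a i + t * (b i - a i)) (b i - a i) t :=
          (hasDerivAt_mul_const (b i - a i)).const_add (a i)
        have hd : HasDerivAt (fs i) (deriv (fs i) (a i + t * (b i - a i)))
            (a i + t * (b i - a i)) :=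
          (((hfs i).differentiable one_ne_zero) _).hasDerivAt
        have := hd.comp t haff
        rw [mul_comm] at this
        exact this
      · exact (continuous_const.mul hderiv_cont).intervalIntegrable 0 1
    rw [key]; norm_num
  have P2 : ∫ t in (0:ℝ)..1, ∑ j, (m i j + m j i) * (a j + t * (b j - a j))
      = ∑ j, (m i j + m j i) * ((a j + b j)/2) := by
    rw [intervalIntegral.integral_finset_sum]
    · apply Finset.sum_congr rfl
      intro j _
      rw [intervalIntegral.integral_const_mul]
      congr 1
      have : ∫ t in (0:ℝ)..1, (a j + t * (b j - a j))
          = (∫ _t in (0:ℝ)..1, (a j)) + (∫ t in (0:ℝ)..1, t * (b j - a j)) := by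
        apply intervalIntegral.integral_add
        · exact intervalIntegrable_const
        · apply Continuous.intervalIntegrable; continuity
      rw [this, intervalIntegral.integral_const, intervalIntegral.integral_mul_const,
        integral_id]
      norm_num; ring
    · intro j _
      apply Continuous.intervalIntegrable; continuity
  rw [mul_add, P1, P2]


theorem bil_diff (n : ℕ) (m : Fin n → Fin n → ℝ) (z : Fin n → ℝ) (e : ℝ) (i : Fin n) :
    (∑ p, ∑ q, m p q * (z p + if p = i then e else 0) * (z q + if q = i then e else 0))
    = (∑ p, ∑ q, m p q * z p * z q)
      + e * ((∑ j, (m i j + m j i) * z j) + e * m i i) := by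
  have inner : ∀ p : Fin n,
      (∑ q, m p q * (z p + if p = i then e else 0) * (z q + if q = i then e else 0))
      = (∑ q, m p q * z p * z q) + m p i * z p * e
        + (if p = i then e * ((∑ q, m p q * z q) + m p i * e) else 0) := by
    intro p
    have hterm : ∀ q ∈ Finset.univ,
        m p q * (z p + if p = i then e else 0) * (z q + if q = i then e else 0)
        = m p q * z p * z q + (if q = i then m p q * z p * e else 0)
          + (if p = i then (m p q * z q * e + (if q = i then m p q * e * e else 0)) else 0) := by
      intro q _
      by_cases hq : q = i <;> by_cases hp : p = i <;> simp [hq, hp] <;> ring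
    rw [Finset.sum_congr rfl hterm]
    rw [Finset.sum_add_distrib, Finset.sum_add_distrib,
      Finset.sum_ite_eq' Finset.univ i (fun q => m p q * z p * e)]
    simp only [Finset.mem_univ, if_true, Finset.sum_ite_irrel, Finset.sum_add_distrib,
      Finset.sum_ite_eq', Finset.sum_const_zero]
    by_cases hp : p = i <;> simp [hp]
    rw [mul_add, Finset.mul_sum]
    have : ∀ q ∈ Finset.univ, m i q * z q * e = e * (m i q * z q) := fun q _ => by ring
    rw [Finset.sum_congr rfl this]
    ring
  rw [Finset.sum_congr rfl (fun p _ => inner p)]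
  rw [Finset.sum_add_distrib, Finset.sum_add_distrib,
    Finset.sum_ite_eq' Finset.univ i (fun p => e * ((∑ q, m p q * z q) + m p i * e))]
  simp only [Finset.mem_univ, if_true]
  have expand : (∑ j, (m i j + m j i) * z j) = (∑ j, m i j * z j) + ∑ j, m j i * z j := by
    rw [← Finset.sum_add_distrib]; apply Finset.sum_congr rfl; intro j _; ring
  rw [expand]
  have swap : (∑ p : Fin n, m p i * z p * e) = e * ∑ j, m j i * z j := by
    rw [Finset.mul_sum]; apply Finset.sum_congr rfl; intro j _; ring
  rw [swap]; ring


theorem IG_eq_BS_of_separable_plus_bilinear (n : ℕ) (hn : 1 ≤ n)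
    (c : ℝ) (fs : Fin n → ℝ → ℝ) (hfs : ∀ i, ContDiff ℝ 1 (fs i))
    (m : Fin n → Fin n → ℝ)
    (f : (Fin n → ℝ) → ℝ)
    (hf : f = fun x => c + ∑ i, fs i (x i) + ∑ i, ∑ j, m i j * x i * x j)
    (a b : Fin n → ℝ) (i : Fin n) :
    IG f a b i = BS f b a i := by
  subst hf
  set e : ℝ := b i - a i with he
  -- IG side
  have hIG : IG (fun x : Fin n → ℝ => c + ∑ p, fs p (x p) + ∑ p, ∑ q, m p q * x p * x q) a b i
      = (fs i (b i) - fs i (a i)) + e * ∑ j, (m i j + m j i) * ((a j + b j)/2) := by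
    rw [IG]
    have hcong : ∀ t ∈ Set.uIcc (0:ℝ) 1,
        fderiv ℝ (fun x : Fin n → ℝ => c + ∑ p, fs p (x p) + ∑ p, ∑ q, m p q * x p * x q)
          (fun j => a j + t * (b j - a j)) (Pi.single i 1)
        = deriv (fs i) (a i + t * (b i - a i))
          + ∑ j, (m i j + m j i) * (a j + t * (b j - a j)) := by
      intro t _
      have h := fderiv_model n c fs hfs m i (fun j => a j + t * (b j - a j))
      simpa using h
    rw [intervalIntegral.integral_congr hcong]
    exact integral_model n fs hfs m a b i
  rw [hIG, BS]
  -- difference value lemma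
  set T := (Finset.univ.erase i) with hT
  set w : ℕ → ℝ := fun k => ((k.factorial * (n - k - 1).factorial : ℝ) / (n.factorial : ℝ)) with hw
  have hiT : i ∉ T := Finset.notMem_erase i _
  have Dval : ∀ S ∈ T.powerset,
      ((c + ∑ p, fs p (patch b a (insert i S) p)
          + ∑ p, ∑ q, m p q * patch b a (insert i S) p * patch b a (insert i S) q)
        - (c + ∑ p, fs p (patch b a S p)
          + ∑ p, ∑ q, m p q * patch b a S p * patch b a S q))
      = (fs i (b i) - fs i (a i))
        + e * ((∑ j, (m i j + m j i) * patch b a S j) + e * m i i) := by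
    intro S hS
    have hiS : i ∉ S := fun h => hiT (Finset.mem_powerset.1 hS h)
    have hzi : patch b a S i = a i := by simp [patch, hiS]
    have hy : patch b a (insert i S)
        = fun p => patch b a S p + if p = i then e else 0 := by
      funext p
      by_cases hp : p = i
      · subst hp; simp [patch, hiS, he]
      · simp [patch, hp, Finset.mem_insert]
    rw [hy]
    simp only []
    rw [bil_diff n m (patch b a S) e i]
    have hsep : (∑ p, fs p (patch b a S p + if p = i then e else 0))
        - (∑ p, fs p (patch b a S p))
        = fs i (b i) - fs i (a i) := by
      rw [← Finset.sum_sub_distrib]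
      rw [Finset.sum_eq_single i]
      · rw [hzi]
        norm_num
        rw [he]; ring_nf
      · intro p _ hp
        simp [hp]
      · intro h; exact absurd (Finset.mem_univ i) h
    have := hsep
    ring_nf
    ring_nf at this
    linarith [this]
  have hBS : (∑ S ∈ T.powerset,
      ((S.card.factorial * (n - S.card - 1).factorial : ℝ) / (n.factorial : ℝ)) *
        ((c + ∑ p, fs p (patch b a (insert i S) p)
          + ∑ p, ∑ q, m p q * patch b a (insert i S) p * patch b a (insert i S) q)
        - (c + ∑ p, fs p (patch b a S p)
          + ∑ p, ∑ q, m p q * patch b a S p * patch b a S q)))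
      = ∑ S ∈ T.powerset,
        w S.card * ((fs i (b i) - fs i (a i))
          + e * ((∑ j, (m i j + m j i) * patch b a S j) + e * m i i)) := by
    apply Finset.sum_congr rfl
    intro S hS
    rw [Dval S hS]
  rw [hBS]
  -- now pure weighted sums
  have hW1 : ∑ S ∈ T.powerset, w S.card = 1 := W1 n hn i
  have hWj : ∀ j : Fin n, (∑ S ∈ T.powerset, w S.card * patch b a S j)
      = if j = i then a i else (a j + b j)/2 := by
    intro j
    by_cases hj : j = i
    · subst hj
      have : ∀ S ∈ T.powerset, w S.card * patch b a S j = w S.card * a j := by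
        intro S hS
        have hiS : j ∉ S := fun h => hiT (Finset.mem_powerset.1 hS h)
        simp [patch, hiS]
      rw [Finset.sum_congr rfl this, ← Finset.sum_mul, hW1]
      simp
    · have h2 := W2 n hn i j hj
      have : ∀ S ∈ T.powerset, w S.card * patch b a S j
          = b j * (w S.card * (if j ∈ S then (1:ℝ) else 0))
            + a j * (w S.card - w S.card * (if j ∈ S then (1:ℝ) else 0)) := by
        intro S hS
        by_cases hjS : j ∈ S <;> simp [patch, hjS] <;> ring
      rw [Finset.sum_congr rfl this, Finset.sum_add_distrib, ← Finset.mul_sum, ← Finset.mul_sum,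
        Finset.sum_sub_distrib, hW1, h2]
      simp [hj]
      ring
  have key : ∑ S ∈ T.powerset,
      w S.card * ((fs i (b i) - fs i (a i))
        + e * ((∑ j, (m i j + m j i) * patch b a S j) + e * m i i))
      = (fs i (b i) - fs i (a i))
        + e * ((∑ j, (m i j + m j i) * (if j = i then a i else (a j + b j)/2)) + e * m i i) := by
    have expand : ∀ S ∈ T.powerset,
        w S.card * ((fs i (b i) - fs i (a i))
          + e * ((∑ j, (m i j + m j i) * patch b a S j) + e * m i i))
        = w S.card * ((fs i (b i) - fs i (a i)) + e * e * m i i)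
          + e * ∑ j, (m i j + m j i) * (w S.card * patch b a S j) := by
      intro S hS
      have l1 : (∑ j, (m i j + m j i) * (w S.card * patch b a S j))
          = w S.card * ∑ j, (m i j + m j i) * patch b a S j := by
        rw [Finset.mul_sum]
        exact Finset.sum_congr rfl (fun j _ => by ring)
      rw [l1]; ring
    rw [Finset.sum_congr rfl expand, Finset.sum_add_distrib, ← Finset.sum_mul, hW1, one_mul,
      ← Finset.mul_sum, Finset.sum_comm]
    have : ∀ j ∈ Finset.univ, (∑ S ∈ T.powerset, (m i j + m j i) * (w S.card * patch b a S j))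
        = (m i j + m j i) * (if j = i then a i else (a j + b j)/2) := by
      intro j _
      rw [← Finset.mul_sum, hWj j]
    rw [Finset.sum_congr rfl this]
    ring
  rw [key]
  have herase : (∑ j ∈ Finset.univ.erase i, (m i j + m j i) * ((a j + b j)/2))
      = ∑ j ∈ Finset.univ.erase i, (m i j + m j i) * (if j = i then a i else (a j + b j)/2) := by
    apply Finset.sum_congr rfl
    intro j hj
    rw [if_neg (Finset.mem_erase.1 hj).1]
  have hsplit1 : (∑ j, (m i j + m j i) * ((a j + b j)/2))
      = (m i i + m i i) * ((a i + b i)/2)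
        + ∑ j ∈ Finset.univ.erase i, (m i j + m j i) * ((a j + b j)/2) :=
    (Finset.add_sum_erase Finset.univ (fun j => (m i j + m j i) * ((a j + b j)/2))
      (Finset.mem_univ i)).symm
  have hsplit2 : (∑ j, (m i j + m j i) * (if j = i then a i else (a j + b j)/2))
      = (m i i + m i i) * a i
        + ∑ j ∈ Finset.univ.erase i, (m i j + m j i) * ((a j + b j)/2) := by
    rw [← Finset.add_sum_erase Finset.univ
      (fun j => (m i j + m j i) * (if j = i then a i else (a j + b j)/2)) (Finset.mem_univ i)]
    rw [if_pos rfl]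
    congr 1
    exact herase.symm
  rw [hsplit1, hsplit2, he]
  ring
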